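/- The affine span of the set of nonsignaling behaviors has dimension Π_{i=1}^m [X i · (A i − 1) + 1] − 1: in the real vector space of functions P : (Π i, Fin (A i)) → (Π i, Fin (X i)) → ℝ, consider the set 𝒫 of behaviors satisfying (i) P(ā|x̄) ≥ 0, (ii) Σ_ā P(ā|x̄) = 1 for every x̄, and (iii) nonsignaling: for every party i and all ā, x̄, the marginal Σ_{a_i} P(ā|x̄) does not depend on the input x_i (it depends only on the outputs and inputs of the other parties). Then the direction of the affine span of 𝒫 has finrank equal to Π_i [X i · (A i − 1) + 1] − 1. -/

import Mathlib

open Finset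

namespace NSDim

variable {m : ℕ} {X A : Fin m → ℕ}

/-- Nonsignaling predicate. -/
def NS (X A : Fin m → ℕ) (P : (∀ i, Fin (A i)) → (∀ i, Fin (X i)) → ℝ) : Prop :=
  ∀ (i : Fin m) (a : ∀ i', Fin (A i')) (x x' : ∀ i', Fin (X i')),
    (∀ i', i' ≠ i → x i' = x' i') →
    ∑ ai : Fin (A i), P (Function.update a i ai) x =
      ∑ ai : Fin (A i), P (Function.update a i ai) x'

lemma piSplitAt_symm_update (i : Fin m) (w ai : Fin (A i))
    (r : ∀ j : {j // j ≠ i}, Fin (A j)) :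
    (Equiv.piSplitAt i (fun j => Fin (A j))).symm (ai, r)
      = Function.update ((Equiv.piSplitAt i (fun j => Fin (A j))).symm (w, r)) i ai := by
  funext j
  by_cases h : j = i
  · subst h; simp [Equiv.piSplitAt, Function.update]
  · simp [Equiv.piSplitAt, Function.update, h]

/-- single-coordinate input change invariance for weighted sums -/
lemma sum_mul_eq_of_ns {P : (∀ i, Fin (A i)) → (∀ i, Fin (X i)) → ℝ}
    (hP : NS X A P) (hA : ∀ i, 1 ≤ A i) (i : Fin m)
    (g : (∀ j, Fin (A j)) → ℝ) (hg : ∀ b ai, g (Function.update b i ai) = g b)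
    (x y : ∀ j, Fin (X j)) (hxy : ∀ j, j ≠ i → x j = y j) :
    ∑ b, g b * P b x = ∑ b, g b * P b y := by
  have key : ∀ z : ∀ j, Fin (X j),
      ∑ b, g b * P b z
        = ∑ r : ∀ j : {j // j ≠ i}, Fin (A j), ∑ ai : Fin (A i),
            g ((Equiv.piSplitAt i (fun j => Fin (A j))).symm (ai, r))
              * P ((Equiv.piSplitAt i (fun j => Fin (A j))).symm (ai, r)) z := by
    intro z
    rw [← (Equiv.piSplitAt i (fun j => Fin (A j))).symm.sum_comp
        (fun b => g b * P b z), Fintype.sum_prod_type, Finset.sum_comm]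
  rw [key x, key y]
  refine Finset.sum_congr rfl fun r _ => ?_
  obtain ⟨base, hb⟩ : ∃ base, ∀ ai, (Equiv.piSplitAt i (fun j => Fin (A j))).symm (ai, r)
      = Function.update base i ai :=
    ⟨_, fun ai => piSplitAt_symm_update i ⟨0, hA i⟩ ai r⟩
  have hz : ∀ z, (∑ ai : Fin (A i),
      g ((Equiv.piSplitAt i (fun j => Fin (A j))).symm (ai, r))
        * P ((Equiv.piSplitAt i (fun j => Fin (A j))).symm (ai, r)) z)
      = g base * ∑ ai : Fin (A i), P (Function.update base i ai) z := by
    intro z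
    rw [Finset.mul_sum]
    refine Finset.sum_congr rfl fun ai _ => ?_
    rw [hb ai, hg]
  rw [hz x, hz y, hP i base x y hxy]

/-- multi-coordinate version -/
lemma sum_mul_eq_of_ns_finset {P : (∀ i, Fin (A i)) → (∀ i, Fin (X i)) → ℝ}
    (hP : NS X A P) (hA : ∀ i, 1 ≤ A i) (S : Finset (Fin m))
    (g : (∀ j, Fin (A j)) → ℝ)
    (hg : ∀ i ∈ S, ∀ b ai, g (Function.update b i ai) = g b)
    (x y : ∀ j, Fin (X j)) (hxy : ∀ j ∉ S, x j = y j) :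
    ∑ b, g b * P b x = ∑ b, g b * P b y := by
  classical
  induction S using Finset.induction_on generalizing x with
  | empty =>
    have : x = y := funext fun j => hxy j (Finset.notMem_empty j)
    rw [this]
  | insert i s hnot ih =>
    set z := Function.update x i (y i) with hz
    have h1 : ∑ b, g b * P b x = ∑ b, g b * P b z := by
      refine sum_mul_eq_of_ns hP hA i g (hg i (Finset.mem_insert_self i s)) x z fun j hj => ?_
      rw [hz, Function.update_of_ne hj]
    have h2 : ∑ b, g b * P b z = ∑ b, g b * P b y := by
      refine ih (fun j hj => hg j (Finset.mem_insert_of_mem hj)) z fun j hj => ?_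
      by_cases hji : j = i
      · subst hji; rw [hz, Function.update_self]
      · rw [hz, Function.update_of_ne hji]; exact hxy j (by simp [hji, hj])
    rw [h1, h2]

lemma total_sum_indep {P : (∀ i, Fin (A i)) → (∀ i, Fin (X i)) → ℝ}
    (hP : NS X A P) (hA : ∀ i, 1 ≤ A i) (x y : ∀ j, Fin (X j)) :
    ∑ b, P b x = ∑ b, P b y := by
  have := sum_mul_eq_of_ns_finset hP hA Finset.univ (fun _ => 1)
    (fun _ _ _ _ => rfl) x y (fun j hj => absurd (Finset.mem_univ j) hj)
  simpa using this

/-- Collins–Gisin index type component -/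
abbrev CG (X A : Fin m → ℕ) (i : Fin m) := Option (Fin (X i) × Fin (A i - 1))

def xOf (hX : ∀ i, 1 ≤ X i) (t : ∀ i, CG X A i) : ∀ i, Fin (X i) :=
  fun i => (t i).elim ⟨0, hX i⟩ Prod.fst

def mcoef (i : Fin m) (s : CG X A i) (b : Fin (A i)) : ℝ :=
  s.elim 1 (fun p => if (b : ℕ) = (p.2 : ℕ) then 1 else 0)

def ccoef (i : Fin m) (b : Fin (A i)) (x : Fin (X i)) (s : CG X A i) : ℝ :=
  s.elim (if (b : ℕ) = A i - 1 then 1 else 0)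
    (fun p => if p.1 = x then
      (if (b : ℕ) = A i - 1 then -1 else if (b : ℕ) = (p.2 : ℕ) then 1 else 0) else 0)

def Phi (hX : ∀ i, 1 ≤ X i) (P : (∀ i, Fin (A i)) → (∀ i, Fin (X i)) → ℝ)
    (t : ∀ i, CG X A i) : ℝ :=
  ∑ b : ∀ i, Fin (A i), (∏ i, mcoef i (t i) (b i)) * P b (xOf hX t)

def Psi (f : (∀ i, CG X A i) → ℝ) (b : ∀ i, Fin (A i)) (x : ∀ i, Fin (X i)) : ℝ :=
  ∑ t : ∀ i, CG X A i, (∏ i, ccoef i (b i) (x i) (t i)) * f t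

lemma sum_pi_prod (F : ∀ i : Fin m, Fin (A i) → ℝ) :
    ∑ b : ∀ i, Fin (A i), ∏ i, F i (b i) = ∏ i, ∑ bi, F i bi := by
  rw [Finset.prod_univ_sum, Fintype.piFinset_univ]

lemma sum_ite_val {n : ℕ} (c : ℕ) (hc : c < n) (v : Fin n → ℝ) :
    ∑ b : Fin n, (if (b : ℕ) = c then v b else 0) = v ⟨c, hc⟩ := by
  have key : ∀ b : Fin n, (if (b : ℕ) = c then v b else 0)
      = if b = ⟨c, hc⟩ then v b else 0 := by
    intro b
    refine if_congr ?_ rfl rfl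
    exact ⟨fun h => Fin.ext h, fun h => congrArg Fin.val h⟩
  rw [Finset.sum_congr rfl fun b _ => key b, Finset.sum_ite_eq' univ]
  simp

lemma ccoef_nonlast (i : Fin m) (b : Fin (A i)) (c : Fin (A i - 1))
    (hbc : (b : ℕ) = (c : ℕ)) (x : Fin (X i)) (s : CG X A i) :
    ccoef i b x s = if s = some (x, c) then 1 else 0 := by
  have hb : (b : ℕ) < A i - 1 := hbc ▸ c.isLt
  cases s with
  | none =>
    simp only [ccoef, Option.elim]
    rw [if_neg (by omega)]
    simp
  | some q =>
    simp only [ccoef, Option.elim]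
    by_cases hq1 : q.1 = x
    · have hne : ¬((b : ℕ) = A i - 1) := by omega
      rw [if_pos hq1, if_neg hne]
      by_cases hq2 : (b : ℕ) = (q.2 : ℕ)
      · rw [if_pos hq2, if_pos (by
          congr 1
          exact Prod.ext hq1 (Fin.ext (show (q.2 : ℕ) = (c : ℕ) by omega)))]
      · rw [if_neg hq2, if_neg (by
          intro h
          apply hq2
          injection h with h2
          rw [h2, hbc])]
    · rw [if_neg hq1, if_neg (by
        intro h
        apply hq1
        injection h with h2
        rw [h2])]

lemma sum_ccoef (hA : ∀ i, 1 ≤ A i) (i : Fin m) (x : Fin (X i)) (s : CG X A i) :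
    ∑ b : Fin (A i), ccoef i b x s = if s = none then 1 else 0 := by
  have hAi := hA i
  cases s with
  | none =>
    rw [if_pos rfl]
    simp only [ccoef, Option.elim]
    rw [sum_ite_val (A i - 1) (by omega) (fun _ => (1:ℝ))]
  | some p =>
    rw [if_neg (Option.some_ne_none p)]
    have hlt : (p.2 : ℕ) < A i - 1 := p.2.isLt
    by_cases hx : p.1 = x
    · have key : ∀ b : Fin (A i), ccoef i b x (some p)
          = (if (b : ℕ) = A i - 1 then (-1:ℝ) else 0)
            + (if (b : ℕ) = (p.2 : ℕ) then 1 else 0) := by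
        intro b
        simp only [ccoef, Option.elim, if_pos hx]
        rcases eq_or_ne ((b : ℕ)) (A i - 1) with h1 | h1
        · have h2 : ¬((b : ℕ) = (p.2 : ℕ)) := by omega
          rw [if_pos h1, if_pos h1, if_neg h2]; ring
        · rw [if_neg h1, if_neg h1]
          rcases eq_or_ne ((b : ℕ)) ((p.2 : ℕ)) with h2 | h2
          · rw [if_pos h2]; ring
          · rw [if_neg h2]; ring
      rw [Finset.sum_congr rfl fun b _ => key b, Finset.sum_add_distrib,
        sum_ite_val (A i - 1) (by omega) (fun _ => (-1:ℝ)),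
        sum_ite_val ((p.2 : ℕ)) (by omega) (fun _ => (1:ℝ))]
      ring
    · have key : ∀ b : Fin (A i), ccoef i b x (some p) = 0 := by
        intro b; simp only [ccoef, Option.elim, if_neg hx]
      rw [Finset.sum_congr rfl fun b _ => key b]
      simp

lemma sum_mcoef_ccoef (hA : ∀ i, 1 ≤ A i) (i : Fin m) (t s : CG X A i)
    (x : Fin (X i)) (hx : ∀ p, t = some p → x = p.1) :
    ∑ b : Fin (A i), mcoef i t b * ccoef i b x s = if s = t then 1 else 0 := by
  cases t with
  | none =>
    simp only [mcoef, Option.elim, one_mul]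
    exact sum_ccoef hA i x s
  | some p =>
    have hxp : x = p.1 := hx p rfl
    have hlt : (p.2 : ℕ) < A i - 1 := p.2.isLt
    have hAi := hA i
    have key : ∀ b : Fin (A i), mcoef i (some p) b * ccoef i b x s
        = if (b : ℕ) = (p.2 : ℕ) then ccoef i b x s else 0 := by
      intro b
      simp only [mcoef, Option.elim, ite_mul, one_mul, zero_mul]
    rw [Finset.sum_congr rfl fun b _ => key b,
      sum_ite_val ((p.2 : ℕ)) (by omega) (fun b => ccoef i b x s),
      ccoef_nonlast i ⟨(p.2 : ℕ), by omega⟩ p.2 rfl x s, hxp]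

lemma prod_ite_eq_pi {κ : Fin m → Type*} [∀ i, Fintype (κ i)] [∀ i, DecidableEq (κ i)]
    (s t : ∀ i, κ i) :
    (∏ i, if s i = t i then (1:ℝ) else 0) = if s = t then 1 else 0 := by
  by_cases h : s = t
  · subst h; simp
  · rw [if_neg h]
    obtain ⟨j, hj⟩ : ∃ j, s j ≠ t j := by
      by_contra hc; push_neg at hc; exact h (funext hc)
    exact Finset.prod_eq_zero (Finset.mem_univ j) (by rw [if_neg hj])

lemma phi_psi (hX : ∀ i, 1 ≤ X i) (hA : ∀ i, 1 ≤ A i)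
    (f : (∀ i, CG X A i) → ℝ) (t : ∀ i, CG X A i) :
    Phi hX (Psi f) t = f t := by
  classical
  unfold Phi Psi
  have step1 : ∀ b : ∀ i, Fin (A i),
      (∏ i, mcoef i (t i) (b i)) *
        (∑ s : ∀ i, CG X A i, (∏ i, ccoef i (b i) (xOf hX t i) (s i)) * f s)
      = ∑ s : ∀ i, CG X A i,
          (∏ i, mcoef i (t i) (b i) * ccoef i (b i) (xOf hX t i) (s i)) * f s := by
    intro b
    rw [Finset.mul_sum]
    refine Finset.sum_congr rfl fun s _ => ?_
    rw [← mul_assoc, ← Finset.prod_mul_distrib]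
  rw [Finset.sum_congr rfl fun b _ => step1 b, Finset.sum_comm]
  have step2 : ∀ s : ∀ i, CG X A i,
      (∑ b : ∀ i, Fin (A i),
        (∏ i, mcoef i (t i) (b i) * ccoef i (b i) (xOf hX t i) (s i)) * f s)
      = (if s = t then 1 else 0) * f s := by
    intro s
    rw [← Finset.sum_mul]
    congr 1
    rw [sum_pi_prod (fun i bi => mcoef i (t i) bi * ccoef i bi (xOf hX t i) (s i))]
    have : ∀ i, (∑ bi : Fin (A i), mcoef i (t i) bi * ccoef i bi (xOf hX t i) (s i))
        = if s i = t i then 1 else 0 := by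
      intro i
      refine sum_mcoef_ccoef hA i (t i) (s i) (xOf hX t i) fun p hp => ?_
      simp [xOf, hp]
    rw [Finset.prod_congr rfl fun i _ => this i, prod_ite_eq_pi]
  rw [Finset.sum_congr rfl fun s _ => step2 s]
  simp only [ite_mul, one_mul, zero_mul]
  rw [Finset.sum_ite_eq' univ]
  simp

lemma ns_psi (hA : ∀ i, 1 ≤ A i) (f : (∀ i, CG X A i) → ℝ)
    (i : Fin m) (a : ∀ i', Fin (A i')) (x x' : ∀ i', Fin (X i'))
    (hxx : ∀ i', i' ≠ i → x i' = x' i') :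
    ∑ ai : Fin (A i), Psi f (Function.update a i ai) x
      = ∑ ai : Fin (A i), Psi f (Function.update a i ai) x' := by
  classical
  have key : ∀ (y : ∀ i', Fin (X i')),
      ∑ ai : Fin (A i), Psi f (Function.update a i ai) y
      = ∑ t : ∀ i', CG X A i',
          ((if t i = none then (1:ℝ) else 0)
            * ∏ j ∈ univ.erase i, ccoef j (a j) (y j) (t j)) * f t := by
    intro y
    unfold Psi
    rw [Finset.sum_comm]
    refine Finset.sum_congr rfl fun t _ => ?_
    rw [← Finset.sum_mul]
    congr 1
    have split : ∀ ai : Fin (A i),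
        (∏ j, ccoef j (Function.update a i ai j) (y j) (t j))
        = ccoef i ai (y i) (t i) * ∏ j ∈ univ.erase i, ccoef j (a j) (y j) (t j) := by
      intro ai
      rw [← Finset.prod_erase_mul univ _ (Finset.mem_univ i), mul_comm]
      congr 1
      · rw [Function.update_self]
      · refine Finset.prod_congr rfl fun j hj => ?_
        rw [Function.update_of_ne (Finset.ne_of_mem_erase hj)]
    rw [Finset.sum_congr rfl fun ai _ => split ai, ← Finset.sum_mul, sum_ccoef hA i (y i) (t i)]
  rw [key x, key x']
  refine Finset.sum_congr rfl fun t _ => ?_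
  by_cases ht : t i = none
  · rw [if_pos ht]
    congr 2
    refine Finset.prod_congr rfl fun j hj => ?_
    rw [hxx j (Finset.ne_of_mem_erase hj)]
  · rw [if_neg ht]
    ring

lemma sum_psi (hA : ∀ i, 1 ≤ A i) (f : (∀ i, CG X A i) → ℝ) (x : ∀ i, Fin (X i)) :
    ∑ b : ∀ i, Fin (A i), Psi f b x = f (fun _ => none) := by
  classical
  unfold Psi
  rw [Finset.sum_comm]
  have step : ∀ t : ∀ i, CG X A i,
      (∑ b : ∀ i, Fin (A i), (∏ i, ccoef i (b i) (x i) (t i)) * f t)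
      = (if t = (fun _ => none) then 1 else 0) * f t := by
    intro t
    rw [← Finset.sum_mul]
    congr 1
    rw [sum_pi_prod (fun i bi => ccoef i bi (x i) (t i)),
      Finset.prod_congr rfl fun i _ => sum_ccoef hA i (x i) (t i)]
    have := prod_ite_eq_pi (κ := fun i => CG X A i) t (fun _ => none)
    simpa using this
  rw [Finset.sum_congr rfl fun t _ => step t]
  simp only [ite_mul, one_mul, zero_mul]
  rw [Finset.sum_ite_eq' univ]
  simp

lemma phi_bot (hX : ∀ i, 1 ≤ X i) (P : (∀ i, Fin (A i)) → (∀ i, Fin (X i)) → ℝ) :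
    Phi hX P (fun _ => none) = ∑ b : ∀ i, Fin (A i), P b (fun i => ⟨0, hX i⟩) := by
  unfold Phi
  refine Finset.sum_congr rfl fun b _ => ?_
  have : (∏ i, mcoef i ((fun _ => none : ∀ i, CG X A i) i) (b i)) = 1 :=
    Finset.prod_eq_one fun i _ => rfl
  rw [this, one_mul]
  rfl

section Inj
variable {P : (∀ i, Fin (A i)) → (∀ i, Fin (X i)) → ℝ}

/-- partial marginal helper -/
def Mg (P : (∀ i, Fin (A i)) → (∀ i, Fin (X i)) → ℝ) (S : Finset (Fin m))
    (a : ∀ i, Fin (A i)) (x : ∀ i, Fin (X i)) : ℝ :=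
  ∑ b : ∀ i, Fin (A i), if (∀ j ∉ S, b j = a j) then P b x else 0

lemma Mg_empty (a : ∀ i, Fin (A i)) (x : ∀ i, Fin (X i)) :
    Mg P ∅ a x = P a x := by
  unfold Mg
  have key : ∀ b : ∀ i, Fin (A i),
      (if (∀ j ∉ (∅ : Finset (Fin m)), b j = a j) then P b x else 0)
      = if b = a then P b x else 0 := by
    intro b
    refine if_congr ⟨fun h => funext fun j => h j (Finset.notMem_empty j),
      fun h j _ => congrFun h j⟩ rfl rfl
  rw [Finset.sum_congr rfl fun b _ => key b, Finset.sum_ite_eq' univ]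
  simp

lemma Mg_insert (S : Finset (Fin m)) (i : Fin m) (hi : i ∉ S)
    (a : ∀ i, Fin (A i)) (x : ∀ i, Fin (X i)) :
    Mg P (insert i S) a x = ∑ ai : Fin (A i), Mg P S (Function.update a i ai) x := by
  unfold Mg
  rw [Finset.sum_comm]
  refine Finset.sum_congr rfl fun b _ => ?_
  have hcond : ∀ ai : Fin (A i),
      (∀ j ∉ S, b j = Function.update a i ai j)
        ↔ (b i = ai ∧ ∀ j ∉ insert i S, b j = a j) := by
    intro ai
    constructor
    · intro h
      refine ⟨by simpa [Function.update_self] using h i hi, fun j hj => ?_⟩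
      have hjS : j ∉ S := fun hc => hj (Finset.mem_insert_of_mem hc)
      have hji : j ≠ i := fun hc => hj (hc ▸ Finset.mem_insert_self i S)
      simpa [Function.update_of_ne hji] using h j hjS
    · rintro ⟨h1, h2⟩ j hj
      by_cases hji : j = i
      · subst hji; rw [Function.update_self]; exact h1
      · rw [Function.update_of_ne hji]
        exact h2 j (by simp [hji, hj])
  have key : ∀ ai : Fin (A i),
      (if (∀ j ∉ S, b j = Function.update a i ai j) then P b x else 0)
      = if b i = ai then (if (∀ j ∉ insert i S, b j = a j) then P b x else 0) else 0 := by
    intro ai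
    rw [if_congr (hcond ai) rfl rfl, ite_and]
  rw [Finset.sum_congr rfl fun ai _ => key ai, Finset.sum_ite_eq univ]
  simp

lemma Mg_congr (hP : NS X A P) (hA : ∀ i, 1 ≤ A i) (S : Finset (Fin m))
    (a : ∀ i, Fin (A i)) (x y : ∀ i, Fin (X i)) (hxy : ∀ j ∉ S, x j = y j) :
    Mg P S a x = Mg P S a y := by
  unfold Mg
  have form : ∀ (z : ∀ i, Fin (X i)),
      ∑ b : ∀ i, Fin (A i), (if (∀ j ∉ S, b j = a j) then P b z else 0)
      = ∑ b : ∀ i, Fin (A i),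
          (if (∀ j ∉ S, b j = a j) then (1:ℝ) else 0) * P b z := by
    intro z
    refine Finset.sum_congr rfl fun b _ => ?_
    rw [ite_mul, one_mul, zero_mul]
  rw [form x, form y]
  refine sum_mul_eq_of_ns_finset hP hA S _ (fun i hiS b ai => ?_) x y hxy
  refine if_congr ?_ rfl rfl
  refine forall_congr' fun j => imp_congr_right fun hj => ?_
  have hji : j ≠ i := fun hc => hj (hc ▸ hiS)
  rw [Function.update_of_ne hji]

lemma Mg_base (hX : ∀ i, 1 ≤ X i) (hA : ∀ i, 1 ≤ A i) (hP : NS X A P)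
    (hPhi : ∀ t, Phi hX P t = 0) (S : Finset (Fin m))
    (a : ∀ i, Fin (A i)) (x : ∀ i, Fin (X i))
    (ha : ∀ i ∉ S, (a i : ℕ) ≠ A i - 1) :
    Mg P S a x = 0 := by
  classical
  set t : ∀ i, CG X A i := fun i =>
    if h : i ∈ S then none
    else some (x i, ⟨(a i : ℕ), by
      have h1 := (a i).isLt
      have h2 := ha i h
      have h3 := hA i
      omega⟩) with ht
  have step1 : Mg P S a x = Mg P S a (xOf hX t) := by
    refine Mg_congr hP hA S a x (xOf hX t) fun j hj => ?_
    simp [xOf, ht, dif_neg hj]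
  have step2 : Mg P S a (xOf hX t) = Phi hX P t := by
    unfold Mg Phi
    refine Finset.sum_congr rfl fun b _ => ?_
    by_cases hc : ∀ j ∉ S, b j = a j
    · rw [if_pos hc, Finset.prod_eq_one, one_mul]
      intro i _
      by_cases hi : i ∈ S
      · simp [mcoef, ht, dif_pos hi]
      · have : t i = some (x i, ⟨(a i : ℕ), by
          have h1 := (a i).isLt; have h2 := ha i hi; have h3 := hA i; omega⟩) := by
          simp [ht, dif_neg hi]
        rw [this]
        simp only [mcoef, Option.elim]
        rw [if_pos]
        exact congrArg Fin.val (hc i hi)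
    · rw [if_neg hc]
      push_neg at hc
      obtain ⟨j, hjS, hbj⟩ := hc
      rw [Finset.prod_eq_zero (Finset.mem_univ j), zero_mul]
      have : t j = some (x j, ⟨(a j : ℕ), by
        have h1 := (a j).isLt; have h2 := ha j hjS; have h3 := hA j; omega⟩) := by
        simp [ht, dif_neg hjS]
      rw [this]
      simp only [mcoef, Option.elim]
      rw [if_neg]
      exact fun h => hbj (Fin.ext h)
  rw [step1, step2]
  exact hPhi t

lemma Mg_zero (hX : ∀ i, 1 ≤ X i) (hA : ∀ i, 1 ≤ A i) (hP : NS X A P)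
    (hPhi : ∀ t, Phi hX P t = 0) :
    ∀ (n : ℕ) (S : Finset (Fin m)) (a : ∀ i, Fin (A i)) (x : ∀ i, Fin (X i)),
      (univ.filter (fun j => j ∉ S ∧ (a j : ℕ) = A j - 1)).card ≤ n →
      Mg P S a x = 0 := by
  classical
  intro n
  induction n with
  | zero =>
    intro S a x hcard
    refine Mg_base hX hA hP hPhi S a x fun i hi hlast => ?_
    have : i ∈ univ.filter (fun j => j ∉ S ∧ (a j : ℕ) = A j - 1) := by
      simp [hi, hlast]
    simp [Finset.card_eq_zero.mp (Nat.le_zero.mp hcard)] at this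
  | succ n ih =>
    intro S a x hcard
    by_cases hc : ∀ i ∉ S, (a i : ℕ) ≠ A i - 1
    · exact Mg_base hX hA hP hPhi S a x hc
    · push_neg at hc
      obtain ⟨i, hiS, hlast⟩ := hc
      have hiF : i ∈ univ.filter (fun j => j ∉ S ∧ (a j : ℕ) = A j - 1) := by
        simp [hiS, hlast]
      -- full marginal over party i is zero
      have hfull : Mg P (insert i S) a x = 0 := by
        refine ih (insert i S) a x ?_
        have hsub : univ.filter (fun j => j ∉ insert i S ∧ (a j : ℕ) = A j - 1)
            ⊆ (univ.filter (fun j => j ∉ S ∧ (a j : ℕ) = A j - 1)).erase i := by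
          intro j hj
          simp only [Finset.mem_filter, Finset.mem_univ, true_and, Finset.mem_insert,
            not_or] at hj
          refine Finset.mem_erase.mpr ⟨hj.1.1, ?_⟩
          simp [hj.1.2, hj.2]
        calc (univ.filter (fun j => j ∉ insert i S ∧ (a j : ℕ) = A j - 1)).card
            ≤ ((univ.filter (fun j => j ∉ S ∧ (a j : ℕ) = A j - 1)).erase i).card :=
              Finset.card_le_card hsub
          _ = (univ.filter (fun j => j ∉ S ∧ (a j : ℕ) = A j - 1)).card - 1 :=
              Finset.card_erase_of_mem hiF
          _ ≤ n := by omega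
      -- non-last terms are zero
      have hterm : ∀ ai : Fin (A i), ai ≠ a i → Mg P S (Function.update a i ai) x = 0 := by
        intro ai hne
        refine ih S (Function.update a i ai) x ?_
        have hsub : univ.filter (fun j => j ∉ S ∧ ((Function.update a i ai j : Fin (A j)) : ℕ) = A j - 1)
            ⊆ (univ.filter (fun j => j ∉ S ∧ (a j : ℕ) = A j - 1)).erase i := by
          intro j hj
          simp only [Finset.mem_filter, Finset.mem_univ, true_and] at hj
          by_cases hji : j = i
          · exfalso
            subst hji
            rw [Function.update_self] at hj
            exact hne (Fin.ext (hj.2.trans hlast.symm))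
          · rw [Function.update_of_ne hji] at hj
            exact Finset.mem_erase.mpr ⟨hji, by simp [hj.1, hj.2]⟩
        calc _ ≤ ((univ.filter (fun j => j ∉ S ∧ (a j : ℕ) = A j - 1)).erase i).card :=
              Finset.card_le_card hsub
          _ = (univ.filter (fun j => j ∉ S ∧ (a j : ℕ) = A j - 1)).card - 1 :=
              Finset.card_erase_of_mem hiF
          _ ≤ n := by omega
      -- combine
      have hrec := Mg_insert (P := P) S i hiS a x
      have hsplit := Finset.add_sum_erase univ
        (fun ai : Fin (A i) => Mg P S (Function.update a i ai) x) (Finset.mem_univ (a i))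
      have herase : ∑ ai ∈ univ.erase (a i), Mg P S (Function.update a i ai) x = 0 :=
        Finset.sum_eq_zero fun ai hai => hterm ai (Finset.ne_of_mem_erase hai)
      have : Mg P S (Function.update a i (a i)) x = 0 := by
        rw [hrec] at hfull
        rw [← hsplit, herase, add_zero] at hfull
        exact hfull
      rwa [Function.update_eq_self] at this

lemma phi_inj (hX : ∀ i, 1 ≤ X i) (hA : ∀ i, 1 ≤ A i) (hP : NS X A P)
    (hPhi : ∀ t, Phi hX P t = 0) : P = 0 := by
  funext a x
  have := Mg_zero hX hA hP hPhi
    ((univ.filter (fun j => j ∉ (∅ : Finset (Fin m)) ∧ (a j : ℕ) = A j - 1)).card)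
    ∅ a x le_rfl
  rw [Mg_empty] at this
  simpa using this

end Inj

section Dim
variable (X A : Fin m → ℕ)

def Wsub : Submodule ℝ ((∀ i, Fin (A i)) → (∀ i, Fin (X i)) → ℝ) where
  carrier := {P | NS X A P}
  add_mem' := by
    intro P Q hP hQ
    intro i a x x' h
    simp only [Pi.add_apply]
    rw [Finset.sum_add_distrib, Finset.sum_add_distrib, hP i a x x' h, hQ i a x x' h]
  zero_mem' := by intro i a x x' h; simp
  smul_mem' := by
    intro c P hP
    intro i a x x' h
    simp only [Pi.smul_apply, smul_eq_mul]
    rw [← Finset.mul_sum, ← Finset.mul_sum, hP i a x x' h]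

def Vsub : Submodule ℝ ((∀ i, Fin (A i)) → (∀ i, Fin (X i)) → ℝ) where
  carrier := {P | (∀ x, ∑ a : ∀ i, Fin (A i), P a x = 0) ∧ NS X A P}
  add_mem' := by
    rintro P Q ⟨hPs, hP⟩ ⟨hQs, hQ⟩
    constructor
    · intro x
      simp only [Pi.add_apply]
      rw [Finset.sum_add_distrib, hPs x, hQs x, add_zero]
    · exact (Wsub X A).add_mem hP hQ
  zero_mem' := by
    constructor
    · intro x; simp
    · exact (Wsub X A).zero_mem
  smul_mem' := by
    rintro c P ⟨hPs, hP⟩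
    constructor
    · intro x
      simp only [Pi.smul_apply, smul_eq_mul]
      rw [← Finset.mul_sum, hPs x, mul_zero]
    · exact (Wsub X A).smul_mem c hP

variable {X A}

noncomputable def PhiL (hX : ∀ i, 1 ≤ X i) :
    Wsub X A →ₗ[ℝ] ((∀ i, CG X A i) → ℝ) where
  toFun P := Phi hX P.1
  map_add' P Q := by
    funext t
    simp only [Phi, Submodule.coe_add, Pi.add_apply]
    rw [← Finset.sum_add_distrib]
    exact Finset.sum_congr rfl fun b _ => by ring
  map_smul' c P := by
    funext t
    simp only [Phi, Submodule.coe_smul, Pi.smul_apply, smul_eq_mul, RingHom.id_apply]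
    rw [Finset.mul_sum]
    exact Finset.sum_congr rfl fun b _ => by ring

lemma phiL_bijective (hX : ∀ i, 1 ≤ X i) (hA : ∀ i, 1 ≤ A i) :
    Function.Bijective (PhiL (X := X) (A := A) hX) := by
  constructor
  · rw [injective_iff_map_eq_zero]
    intro P hP0
    exact Subtype.ext (phi_inj hX hA P.2 fun t => congrFun hP0 t)
  · intro f
    exact ⟨⟨Psi f, fun i a x x' h => ns_psi hA f i a x x' h⟩,
      funext fun t => phi_psi hX hA f t⟩

noncomputable def Lfun (hX : ∀ i, 1 ≤ X i) : Wsub X A →ₗ[ℝ] ℝ :=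
  (LinearMap.proj (fun _ => none : ∀ i, CG X A i)).comp (PhiL hX)

lemma Lfun_surj (hX : ∀ i, 1 ≤ X i) (hA : ∀ i, 1 ≤ A i) :
    LinearMap.range (Lfun (X := X) (A := A) hX) = ⊤ := by
  rw [LinearMap.range_eq_top]
  intro c
  refine ⟨c • ⟨Psi (fun _ => 1), fun i a x x' h => ns_psi hA _ i a x x' h⟩, ?_⟩
  rw [map_smul]
  have : Lfun hX (⟨Psi (fun _ => (1:ℝ)), fun i a x x' h => ns_psi hA _ i a x x' h⟩ : Wsub X A)
      = 1 := by
    show Phi hX (Psi (fun _ => (1:ℝ))) (fun _ => none) = 1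
    rw [phi_psi hX hA]
  rw [this]
  simp

lemma card_CGpi : Fintype.card (∀ i, CG X A i) = ∏ i, (X i * (A i - 1) + 1) := by
  rw [Fintype.card_pi]
  exact Finset.prod_congr rfl fun i _ => by
    simp [Fintype.card_option, Fintype.card_prod]

lemma finrank_Wsub (hX : ∀ i, 1 ≤ X i) (hA : ∀ i, 1 ≤ A i) :
    Module.finrank ℝ (Wsub X A) = ∏ i, (X i * (A i - 1) + 1) := by
  rw [LinearEquiv.finrank_eq (LinearEquiv.ofBijective _ (phiL_bijective hX hA)),
    Module.finrank_pi, card_CGpi]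

lemma finrank_ker_Lfun (hX : ∀ i, 1 ≤ X i) (hA : ∀ i, 1 ≤ A i) :
    Module.finrank ℝ (LinearMap.ker (Lfun (X := X) (A := A) hX))
      = ∏ i, (X i * (A i - 1) + 1) - 1 := by
  have h := LinearMap.finrank_range_add_finrank_ker (Lfun (X := X) (A := A) hX)
  rw [Lfun_surj hX hA, finrank_top, Module.finrank_self, finrank_Wsub hX hA] at h
  omega

lemma Vsub_eq (hX : ∀ i, 1 ≤ X i) (hA : ∀ i, 1 ≤ A i) :
    Vsub X A = (LinearMap.ker (Lfun (X := X) (A := A) hX)).map (Wsub X A).subtype := by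
  ext P
  constructor
  · rintro ⟨hsum, hns⟩
    refine ⟨⟨P, hns⟩, ?_, rfl⟩
    show Phi hX P (fun _ => none) = 0
    rw [phi_bot]
    exact hsum _
  · rintro ⟨⟨P, hns⟩, hker, rfl⟩
    refine ⟨fun x => ?_, hns⟩
    have h0 : Phi hX P (fun _ => none) = 0 := hker
    rw [phi_bot] at h0
    calc ∑ a : ∀ i, Fin (A i), P a x
        = ∑ a : ∀ i, Fin (A i), P a (fun i => ⟨0, hX i⟩) := total_sum_indep hns hA x _
      _ = 0 := h0

lemma finrank_Vsub (hX : ∀ i, 1 ≤ X i) (hA : ∀ i, 1 ≤ A i) :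
    Module.finrank ℝ (Vsub X A) = ∏ i, (X i * (A i - 1) + 1) - 1 := by
  rw [Vsub_eq hX hA, Submodule.finrank_map_subtype_eq, finrank_ker_Lfun hX hA]

end Dim

section Affine
variable {X A : Fin m → ℕ}

lemma span_eq_mk' (hX : ∀ i, 1 ≤ X i) (hA : ∀ i, 1 ≤ A i) :
    affineSpan ℝ {P : (∀ i, Fin (A i)) → (∀ i, Fin (X i)) → ℝ |
        (∀ a x, 0 ≤ P a x) ∧ (∀ x, ∑ a : ∀ i, Fin (A i), P a x = 1) ∧ NS X A P}
      = AffineSubspace.mk'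
          ((fun _ _ => (∏ i, (A i : ℝ))⁻¹) : (∀ i, Fin (A i)) → (∀ i, Fin (X i)) → ℝ)
          (Vsub X A) := by
  classical
  set c : ℝ := (∏ i, (A i : ℝ))⁻¹ with hcdef
  set P₀ : (∀ i, Fin (A i)) → (∀ i, Fin (X i)) → ℝ := fun _ _ => c with hP₀def
  set PP : Set ((∀ i, Fin (A i)) → (∀ i, Fin (X i)) → ℝ) :=
    {P | (∀ a x, 0 ≤ P a x) ∧ (∀ x, ∑ a : ∀ i, Fin (A i), P a x = 1) ∧ NS X A P} with hPP
  have hprodpos : (0:ℝ) < ∏ i, (A i : ℝ) :=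
    Finset.prod_pos fun i _ => by exact_mod_cast Nat.lt_of_lt_of_le Nat.zero_lt_one (hA i)
  have hc : 0 < c := inv_pos.mpr hprodpos
  have hcard : (Fintype.card (∀ i, Fin (A i)) : ℝ) = ∏ i, (A i : ℝ) := by
    rw [Fintype.card_pi]
    push_cast
    exact Finset.prod_congr rfl fun i _ => by rw [Fintype.card_fin]
  have hsum0 : ∀ x : ∀ i, Fin (X i), ∑ a : ∀ i, Fin (A i), P₀ a x = 1 := by
    intro x
    rw [hP₀def]
    rw [Finset.sum_const, Finset.card_univ, nsmul_eq_mul, hcard, hcdef,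
      mul_inv_cancel₀ hprodpos.ne']
  have hP₀NS : NS X A P₀ := by intro i a x x' h; rfl
  have hP₀mem : P₀ ∈ PP := ⟨fun a x => hc.le, hsum0, hP₀NS⟩
  refine le_antisymm (affineSpan_le.mpr ?_) ?_
  · -- PP ⊆ mk'
    intro Q hQ
    rw [SetLike.mem_coe, AffineSubspace.mem_mk', vsub_eq_sub]
    refine ⟨fun x => ?_, ?_⟩
    · simp only [Pi.sub_apply]
      rw [Finset.sum_sub_distrib, hQ.2.1 x, hsum0 x, sub_self]
    · intro i a x x' h
      simp only [Pi.sub_apply]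
      rw [Finset.sum_sub_distrib, Finset.sum_sub_distrib, hQ.2.2 i a x x' h,
        hP₀NS i a x x' h]
  · -- mk' ≤ affineSpan
    intro Q hQ
    have hv : Q - P₀ ∈ Vsub X A := by
      have := AffineSubspace.mem_mk'.mp hQ
      rwa [vsub_eq_sub] at this
    have key : ∀ v ∈ Vsub X A, v + P₀ ∈ affineSpan ℝ PP := by
      intro v hvV
      set s : ℝ := ∑ a : ∀ i, Fin (A i), ∑ x : ∀ i, Fin (X i), |v a x| with hsdef
      have hs0 : 0 ≤ s :=
        Finset.sum_nonneg fun a _ => Finset.sum_nonneg fun x _ => abs_nonneg _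
      set ε : ℝ := c / (s + 1) with hεdef
      have hε : 0 < ε := div_pos hc (by linarith)
      have habs : ∀ a x, |v a x| ≤ s := by
        intro a x
        have h1 : |v a x| ≤ ∑ x' : ∀ i, Fin (X i), |v a x'| :=
          Finset.single_le_sum (f := fun x' => |v a x'|)
            (fun x' _ => abs_nonneg _) (Finset.mem_univ x)
        have h2 : (∑ x' : ∀ i, Fin (X i), |v a x'|) ≤ s :=
          Finset.single_le_sum
            (f := fun a => ∑ x' : ∀ i, Fin (X i), |v a x'|)
            (fun a' _ => Finset.sum_nonneg fun x' _ => abs_nonneg _) (Finset.mem_univ a)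
        linarith
      have hεs : ε * s ≤ c := by
        rw [hεdef, div_mul_eq_mul_div, div_le_iff₀ (by linarith : (0:ℝ) < s + 1)]
        nlinarith
      have hQPP : P₀ + ε • v ∈ PP := by
        refine ⟨fun a x => ?_, fun x => ?_, ?_⟩
        · have h1 : -(ε * s) ≤ ε * v a x := by
            nlinarith [neg_abs_le (v a x), habs a x]
          have h2 : (P₀ + ε • v) a x = c + ε * v a x := by
            simp [hP₀def, Pi.add_apply, Pi.smul_apply, smul_eq_mul]
          rw [h2]
          linarith
        · simp only [Pi.add_apply, Pi.smul_apply, smul_eq_mul]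
          rw [Finset.sum_add_distrib, ← Finset.mul_sum, hvV.1 x, hsum0 x, mul_zero, add_zero]
        · intro i a x x' h
          simp only [Pi.add_apply, Pi.smul_apply, smul_eq_mul]
          rw [Finset.sum_add_distrib, Finset.sum_add_distrib, ← Finset.mul_sum,
            ← Finset.mul_sum, hvV.2 i a x x' h, hP₀NS i a x x' h]
      have hdiff : (P₀ + ε • v) -ᵥ P₀ ∈ (affineSpan ℝ PP).direction :=
        AffineSubspace.vsub_mem_direction (subset_affineSpan ℝ PP hQPP)
          (subset_affineSpan ℝ PP hP₀mem)
      have hεv : ε • v ∈ (affineSpan ℝ PP).direction := by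
        rwa [vsub_eq_sub, add_sub_cancel_left] at hdiff
      have hvdir : v ∈ (affineSpan ℝ PP).direction := by
        have := Submodule.smul_mem _ ε⁻¹ hεv
        rwa [smul_smul, inv_mul_cancel₀ hε.ne', one_smul] at this
      have := AffineSubspace.vadd_mem_of_mem_direction hvdir
        (subset_affineSpan ℝ PP hP₀mem)
      simpa [vadd_eq_add, add_comm] using this
    have := key (Q - P₀) hv
    simpa [sub_add_cancel] using this

end Affine
end NSDim

/-- **Affine dimension of the nonsignaling set.** In the space of functions
`P : (∀ i, Fin (A i)) → (∀ i, Fin (X i)) → ℝ`, the set of nonsignaling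
behaviors (nonnegative, normalized for each input, and with marginals over any
party's output independent of that party's input) has an affine span whose
direction has finrank `∏ᵢ [Xᵢ·(Aᵢ − 1) + 1] − 1`. -/
theorem nonsignaling_affine_dimension
    {m : ℕ} (hm : 1 ≤ m)
    (X A : Fin m → ℕ) (hX : ∀ i, 1 ≤ X i) (hA : ∀ i, 1 ≤ A i) :
    Module.finrank ℝ
      (affineSpan ℝ
        {P : (∀ i, Fin (A i)) → (∀ i, Fin (X i)) → ℝ |
          (∀ a x, 0 ≤ P a x) ∧
          (∀ x, ∑ a : ∀ i, Fin (A i), P a x = 1) ∧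
          (∀ (i : Fin m) (a : ∀ i', Fin (A i')) (x x' : ∀ i', Fin (X i')),
            (∀ i', i' ≠ i → x i' = x' i') →
            ∑ ai : Fin (A i), P (Function.update a i ai) x =
              ∑ ai : Fin (A i), P (Function.update a i ai) x')}).direction =
      ∏ i, (X i * (A i - 1) + 1) - 1 := by
  have hset : {P : (∀ i, Fin (A i)) → (∀ i, Fin (X i)) → ℝ |
          (∀ a x, 0 ≤ P a x) ∧
          (∀ x, ∑ a : ∀ i, Fin (A i), P a x = 1) ∧
          (∀ (i : Fin m) (a : ∀ i', Fin (A i')) (x x' : ∀ i', Fin (X i')),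
            (∀ i', i' ≠ i → x i' = x' i') →
            ∑ ai : Fin (A i), P (Function.update a i ai) x =
              ∑ ai : Fin (A i), P (Function.update a i ai) x')}
      = {P : (∀ i, Fin (A i)) → (∀ i, Fin (X i)) → ℝ |
          (∀ a x, 0 ≤ P a x) ∧ (∀ x, ∑ a : ∀ i, Fin (A i), P a x = 1) ∧ NSDim.NS X A P} := rfl
  rw [hset, NSDim.span_eq_mk' hX hA, AffineSubspace.direction_mk',
    NSDim.finrank_Vsub hX hA]
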